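/- arXiv:0902.1917 — 2 statements merged into one kernel-verified Lean document; each statement's English description precedes it below -/
import Mathlib

section
/- Let 𝒞 be the annulus {y ∈ ℝ^d : ‖x‖ − ε ≤ ‖y − x‖ ≤ ‖x‖} centered at x ∈ ℝ^d with ‖x‖ > 1 and thickness ε ∈ (0,1]. Then for every ρ ∈ [ε, 1], the normalized uniform measure σ_ρ on the sphere S_ρ of radius ρ centered at the origin satisfies σ_ρ(S_ρ ∩ 𝒞) ≥ c_d · ε/ρ, for some constant c_d > 0 depending only on the dimension d ≥ 2. -/
open MeasureTheory Metric Filter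
open scoped MeasureTheory ENNReal

section AvgAnnuliProof

open Set
open scoped NNReal Pointwise

namespace AvgAnnuli




/-- pi-volume lower bound for Euclidean Hausdorff measure. -/
lemma volume_le_hausdorff (n : ℕ) (A : Set (EuclideanSpace ℝ (Fin n))) :
    volume ((WithLp.equiv 2 (Fin n → ℝ)) '' A) ≤ μH[(n : ℝ)] A := by
  have h := (PiLp.lipschitzWith_ofLp 2 (fun _ : Fin n => ℝ)).hausdorffMeasure_image_le
    (d := (n : ℝ)) (by positivity) A
  have hpi : (μH[(n : ℝ)] : Measure (Fin n → ℝ)) = volume := by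
    have := hausdorffMeasure_pi_real (ι := Fin n)
    simpa using this
  simpa [hpi] using h

/-- Euclidean Hausdorff measure of a subset of a ball is finite. -/
lemma hausdorff_closedBall_ne_top (n : ℕ) (R : ℝ) :
    μH[(n : ℝ)] (closedBall (0 : EuclideanSpace ℝ (Fin n)) R) ≠ ∞ := by
  obtain ⟨K, hK⟩ : ∃ K : ℝ≥0, LipschitzWith K ((WithLp.equiv 2 (Fin n → ℝ)).symm) := by
    exact ⟨_, (PiLp.antilipschitzWith_ofLp 2 (fun _ : Fin n => ℝ)).to_rightInverse
      (WithLp.equiv 2 (Fin n → ℝ)).right_inv⟩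
  set A := closedBall (0 : EuclideanSpace ℝ (Fin n)) R
  have himg : A = (WithLp.equiv 2 (Fin n → ℝ)).symm '' ((WithLp.equiv 2 (Fin n → ℝ)) '' A) := by
    simp [Set.image_image]
  have h1 : μH[(n : ℝ)] A ≤ (K : ℝ≥0∞) ^ (n : ℝ) * μH[(n : ℝ)] ((WithLp.equiv 2 (Fin n → ℝ)) '' A) := by
    calc μH[(n : ℝ)] A
        = μH[(n : ℝ)] ((WithLp.equiv 2 (Fin n → ℝ)).symm '' ((WithLp.equiv 2 (Fin n → ℝ)) '' A)) := by
          rw [← himg]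
      _ ≤ (K : ℝ≥0∞) ^ (n : ℝ) * μH[(n : ℝ)] ((WithLp.equiv 2 (Fin n → ℝ)) '' A) :=
          hK.hausdorffMeasure_image_le (by positivity) _
  have hpi : (μH[(n : ℝ)] : Measure (Fin n → ℝ)) = volume := by
    have := hausdorffMeasure_pi_real (ι := Fin n)
    simpa using this
  have h2 : μH[(n : ℝ)] ((WithLp.equiv 2 (Fin n → ℝ)) '' A) ≤ volume (Set.pi univ fun _ : Fin n => Icc (-|R|) |R|) := by
    rw [hpi]
    refine measure_mono ?_
    rintro g ⟨z, hz, rfl⟩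
    intro j _
    have hzj : |z j| ≤ ‖z‖ := by
      rw [EuclideanSpace.norm_eq]
      refine le_trans ?_ (Real.sqrt_le_sqrt (Finset.single_le_sum
        (f := fun i => ‖z i‖ ^ 2) (fun i _ => by positivity) (Finset.mem_univ j)))
      rw [Real.sqrt_sq_eq_abs]
      simp
    have hzn : ‖z‖ ≤ |R| := by
      have := mem_closedBall_zero_iff.mp hz
      exact this.trans (le_abs_self R)
    constructor
    · simpa using neg_le_of_abs_le (hzj.trans hzn)
    · simpa using le_of_abs_le (hzj.trans hzn)
  have h3 : volume (Set.pi univ fun _ : Fin n => Icc (-|R|) |R|) ≠ ∞ := by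
    rw [volume_pi_pi]
    exact ENNReal.prod_ne_top fun i _ => by simp [Real.volume_Icc]
  intro htop
  rw [htop] at h1
  have : (K : ℝ≥0∞) ^ (n : ℝ) * μH[(n : ℝ)] ((WithLp.equiv 2 (Fin n → ℝ)) '' A) ≠ ∞ := by
    refine ENNReal.mul_ne_top ?_ (lt_of_le_of_lt h2 h3.lt_top).ne
    exact (ENNReal.rpow_lt_top_of_nonneg (Nat.cast_nonneg n) ENNReal.coe_ne_top).ne
  exact this (top_le_iff.mp h1)





lemma abs_sqrt_sub_sqrt_le {A B c : ℝ} (hc : 0 < c) (hA : c ≤ A) (hB : c ≤ B) :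
    |Real.sqrt A - Real.sqrt B| ≤ |A - B| / (2 * Real.sqrt c) := by
  have hA0 : (0:ℝ) ≤ A := hc.le.trans hA
  have hB0 : (0:ℝ) ≤ B := hc.le.trans hB
  have hsc : 0 < Real.sqrt c := Real.sqrt_pos.mpr hc
  have hsA : Real.sqrt c ≤ Real.sqrt A := Real.sqrt_le_sqrt hA
  have hsB : Real.sqrt c ≤ Real.sqrt B := Real.sqrt_le_sqrt hB
  rw [le_div_iff₀ (by positivity)]
  have key : (Real.sqrt A - Real.sqrt B) * (Real.sqrt A + Real.sqrt B) = A - B := by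
    have h1 : Real.sqrt A ^ 2 = A := Real.sq_sqrt hA0
    have h2 : Real.sqrt B ^ 2 = B := Real.sq_sqrt hB0
    nlinarith
  calc |Real.sqrt A - Real.sqrt B| * (2 * Real.sqrt c)
      ≤ |Real.sqrt A - Real.sqrt B| * (Real.sqrt A + Real.sqrt B) := by
        gcongr; linarith
    _ = |Real.sqrt A - Real.sqrt B| * |Real.sqrt A + Real.sqrt B| := by
        rw [abs_of_nonneg (show (0:ℝ) ≤ Real.sqrt A + Real.sqrt B by positivity)]
    _ = |A - B| := by rw [← abs_mul, key]

lemma sqrt_add_sq_le (u v : ℝ) : Real.sqrt (u ^ 2 + v ^ 2) ≤ |u| + |v| := by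
  have h : u ^ 2 + v ^ 2 ≤ (|u| + |v|) ^ 2 := by
    have := abs_nonneg u; have := abs_nonneg v
    nlinarith [sq_abs u, sq_abs v]
  calc Real.sqrt (u ^ 2 + v ^ 2) ≤ Real.sqrt ((|u| + |v|) ^ 2) := Real.sqrt_le_sqrt h
    _ = |u| + |v| := Real.sqrt_sq (by positivity)

/-- Norm formula for an `insertNth` difference in Euclidean space. -/
lemma dist_insertNth_le (m : ℕ) (i : Fin (m + 2)) (a b : ℝ)
    (z w : EuclideanSpace ℝ (Fin (m + 1))) :
    dist (α := EuclideanSpace ℝ (Fin (m + 2)))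
      (WithLp.toLp 2 (i.insertNth a z)) (WithLp.toLp 2 (i.insertNth b w)) ≤ |a - b| + dist z w := by
  rw [EuclideanSpace.dist_eq]
  rw [Fin.sum_univ_succAbove _ i]
  simp only [PiLp.toLp_apply, Fin.insertNth_apply_same, Fin.insertNth_apply_succAbove]
  have hz : ∑ j : Fin (m + 1), dist (z j) (w j) ^ 2 = dist z w ^ 2 := by
    rw [EuclideanSpace.dist_eq, Real.sq_sqrt (by positivity)]
  rw [hz]
  have := sqrt_add_sq_le (dist a b) (dist z w)
  simpa [Real.dist_eq, abs_of_nonneg dist_nonneg] using this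


lemma hausdorff_sphere_one_ne_top (m : ℕ) :
    μH[((m:ℝ)+1)] (sphere (0 : EuclideanSpace ℝ (Fin (m+2))) 1) ≠ ∞ := by
  set c₀ : ℝ := 1 / (m+2) with hc₀def
  have hc₀ : 0 < c₀ := by positivity
  have hc₀1 : c₀ ≤ 1 := by
    rw [hc₀def]
    rw [div_le_one (by positivity)]
    have : (0:ℝ) ≤ (m:ℝ) := Nat.cast_nonneg m
    linarith
  set D : Set (EuclideanSpace ℝ (Fin (m+1))) := {z | ‖z‖^2 ≤ 1 - c₀} with hDdef
  set F : Fin (m+2) → ℝ → EuclideanSpace ℝ (Fin (m+1)) → EuclideanSpace ℝ (Fin (m+2)) :=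
    fun i σ z => WithLp.toLp 2 (i.insertNth (σ * Real.sqrt (1 - ‖z‖^2)) z) with hFdef
  -- covering
  have hcover : sphere (0 : EuclideanSpace ℝ (Fin (m+2))) 1 ⊆
      ⋃ i : Fin (m+2), (F i 1 '' D ∪ F i (-1) '' D) := by
    intro y hy
    have hy1 : ∑ j, y j ^ 2 = 1 := by
      have h := mem_sphere_zero_iff_norm.mp hy
      rw [EuclideanSpace.norm_eq] at h
      have h2 := congrArg (· ^ 2) h
      simp only [Real.sq_sqrt (show (0:ℝ) ≤ ∑ j, ‖y j‖^2 by positivity), one_pow] at h2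
      simpa [Real.norm_eq_abs, sq_abs] using h2
    obtain ⟨i, hi⟩ : ∃ i, c₀ ≤ y i ^ 2 := by
      by_contra h
      push_neg at h
      have hlt : ∑ j, y j ^ 2 < ∑ _j : Fin (m+2), c₀ :=
        Finset.sum_lt_sum_of_nonempty Finset.univ_nonempty fun j _ => h j
      rw [hy1, Finset.sum_const, Finset.card_univ, Fintype.card_fin, nsmul_eq_mul,
        hc₀def] at hlt
      push_cast at hlt
      rw [mul_one_div, div_self (by positivity)] at hlt
      exact lt_irrefl _ hlt
    set z : EuclideanSpace ℝ (Fin (m+1)) := WithLp.toLp 2 (i.removeNth y) with hzdef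
    have hz2 : ‖z‖^2 = 1 - y i ^ 2 := by
      rw [EuclideanSpace.norm_eq, Real.sq_sqrt (by positivity)]
      have hsum := Fin.sum_univ_succAbove (fun j => y j ^ 2) i
      rw [hy1] at hsum
      simp only [Real.norm_eq_abs, sq_abs]
      have : ∑ j : Fin (m+1), z j ^ 2 = ∑ j : Fin (m+1), y (i.succAbove j) ^ 2 := rfl
      rw [this]
      linarith
    have hsq : Real.sqrt (1 - ‖z‖^2) = |y i| := by
      rw [hz2, show 1 - (1 - y i ^2) = y i ^ 2 by ring, Real.sqrt_sq_eq_abs]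
    have hzD : z ∈ D := by
      rw [hDdef, mem_setOf_eq, hz2]
      linarith
    refine mem_iUnion.mpr ⟨i, ?_⟩
    rcases le_or_gt 0 (y i) with h0 | h0
    · refine Or.inl ⟨z, hzD, ?_⟩
      rw [hFdef]
      simp only [one_mul, hsq, abs_of_nonneg h0]
      exact congrArg (WithLp.toLp 2) (Fin.insertNth_self_removeNth i y)
    · refine Or.inr ⟨z, hzD, ?_⟩
      rw [hFdef]
      simp only [hsq, abs_of_neg h0, neg_one_mul, neg_neg]
      exact congrArg (WithLp.toLp 2) (Fin.insertNth_self_removeNth i y)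
  -- Lipschitz bound
  set K : ℝ≥0 := (m+3 : ℝ≥0) with hKdef
  have hsqc : 1 / ((m:ℝ)+2) ≤ Real.sqrt c₀ := by
    have h1 : (1 / ((m:ℝ)+2))^2 ≤ c₀ := by
      rw [hc₀def]
      have hm2 : (1:ℝ) ≤ (m:ℝ)+2 := by
        have : (0:ℝ) ≤ (m:ℝ) := Nat.cast_nonneg m
        linarith
      rw [div_pow, one_pow]
      push_cast
      rw [div_le_div_iff₀ (by positivity) (by positivity)]
      nlinarith
    calc 1 / ((m:ℝ)+2) = Real.sqrt ((1 / ((m:ℝ)+2))^2) := (Real.sqrt_sq (by positivity)).symm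
      _ ≤ Real.sqrt c₀ := Real.sqrt_le_sqrt h1
  have hlip : ∀ (i : Fin (m+2)) (σ : ℝ), |σ| = 1 → LipschitzOnWith K (F i σ) D := by
    intro i σ hσ
    rw [lipschitzOnWith_iff_dist_le_mul]
    intro z hz w hw
    have hz1 : ‖z‖^2 ≤ 1 - c₀ := hz
    have hw1 : ‖w‖^2 ≤ 1 - c₀ := hw
    have hzn : ‖z‖ ≤ 1 := by nlinarith [norm_nonneg z]
    have hwn : ‖w‖ ≤ 1 := by nlinarith [norm_nonneg w]
    have h1 : dist (F i σ z) (F i σ w)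
        ≤ |σ * Real.sqrt (1 - ‖z‖^2) - σ * Real.sqrt (1 - ‖w‖^2)| + dist z w :=
      dist_insertNth_le m i _ _ z w
    have h2 : |σ * Real.sqrt (1 - ‖z‖^2) - σ * Real.sqrt (1 - ‖w‖^2)|
        = |Real.sqrt (1 - ‖z‖^2) - Real.sqrt (1 - ‖w‖^2)| := by
      rw [← mul_sub, abs_mul, hσ, one_mul]
    have h3 : |Real.sqrt (1 - ‖z‖^2) - Real.sqrt (1 - ‖w‖^2)|
        ≤ |(1 - ‖z‖^2) - (1 - ‖w‖^2)| / (2 * Real.sqrt c₀) := by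
      refine abs_sqrt_sub_sqrt_le hc₀ (by linarith) (by linarith)
    have h4 : |(1 - ‖z‖^2) - (1 - ‖w‖^2)| ≤ 2 * dist z w := by
      have habs : |(1 - ‖z‖^2) - (1 - ‖w‖^2)| = |‖w‖ - ‖z‖| * (‖w‖ + ‖z‖) := by
        rw [show (1 - ‖z‖^2) - (1 - ‖w‖^2) = (‖w‖ - ‖z‖) * (‖w‖ + ‖z‖) by ring,
          abs_mul, abs_of_nonneg (show (0:ℝ) ≤ ‖w‖ + ‖z‖ by positivity)]
      rw [habs]
      have h5 : |‖w‖ - ‖z‖| ≤ ‖w - z‖ := abs_norm_sub_norm_le w z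
      have h6 : ‖w - z‖ = dist z w := by rw [dist_comm, dist_eq_norm]
      nlinarith [dist_nonneg (x := z) (y := w), abs_nonneg (‖w‖ - ‖z‖)]
    have hsqcpos : 0 < Real.sqrt c₀ := Real.sqrt_pos.mpr hc₀
    have h7 : |(1 - ‖z‖^2) - (1 - ‖w‖^2)| / (2 * Real.sqrt c₀) ≤ ((m:ℝ)+2) * dist z w := by
      rw [div_le_iff₀ (by positivity)]
      have hge : 1 / ((m:ℝ)+2) * (2 * dist z w) ≤ Real.sqrt c₀ * (2 * dist z w) := by
        have := dist_nonneg (x := z) (y := w)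
        gcongr
      have hmpos : (0:ℝ) < (m:ℝ)+2 := by positivity
      calc |(1 - ‖z‖^2) - (1 - ‖w‖^2)| ≤ 2 * dist z w := h4
        _ = ((m:ℝ)+2) * (1 / ((m:ℝ)+2) * (2 * dist z w)) := by field_simp
        _ ≤ ((m:ℝ)+2) * (Real.sqrt c₀ * (2 * dist z w)) := by gcongr
        _ = ((m:ℝ)+2) * dist z w * (2 * Real.sqrt c₀) := by ring
    have hK : (K : ℝ) = (m:ℝ) + 3 := by
      rw [hKdef]; push_cast; ring
    calc dist (F i σ z) (F i σ w)
        ≤ |Real.sqrt (1 - ‖z‖^2) - Real.sqrt (1 - ‖w‖^2)| + dist z w := by rw [← h2]; exact h1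
      _ ≤ ((m:ℝ)+2) * dist z w + dist z w := by
          have := h3.trans h7
          linarith
      _ = ((m:ℝ)+3) * dist z w := by ring
      _ = (K : ℝ) * dist z w := by rw [hK]
  -- finiteness of μH D
  have hexp : (0:ℝ) ≤ (m:ℝ)+1 := by positivity
  have hDfin : μH[((m:ℝ)+1)] D ≠ ∞ := by
    have hsub : D ⊆ closedBall (0 : EuclideanSpace ℝ (Fin (m+1))) 1 := by
      intro z hz
      have hz1 : ‖z‖^2 ≤ 1 - c₀ := hz
      rw [mem_closedBall_zero_iff]
      nlinarith [norm_nonneg z]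
    have hball := hausdorff_closedBall_ne_top (m+1) 1
    have hcast : ((m+1:ℕ):ℝ) = (m:ℝ)+1 := by push_cast; ring
    rw [hcast] at hball
    exact fun h => hball (top_le_iff.mp (h ▸ measure_mono hsub))
  -- each piece finite
  have hpiece : ∀ (i : Fin (m+2)) (σ : ℝ), |σ| = 1 →
      μH[((m:ℝ)+1)] (F i σ '' D) ≠ ∞ := by
    intro i σ hσ
    have h := (hlip i σ hσ).hausdorffMeasure_image_le hexp
    intro htop
    rw [htop] at h
    have : (K : ℝ≥0∞) ^ ((m:ℝ)+1) * μH[((m:ℝ)+1)] D ≠ ∞ :=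
      ENNReal.mul_ne_top (ENNReal.rpow_lt_top_of_nonneg hexp ENNReal.coe_ne_top).ne hDfin
    exact this (top_le_iff.mp h)
  -- assemble
  have hle : μH[((m:ℝ)+1)] (sphere (0 : EuclideanSpace ℝ (Fin (m+2))) 1)
      ≤ ∑ i : Fin (m+2), μH[((m:ℝ)+1)] (F i 1 '' D ∪ F i (-1) '' D) :=
    (measure_mono hcover).trans (measure_iUnion_fintype_le _ _)
  intro htop
  rw [htop] at hle
  have hfin : ∑ i : Fin (m+2), μH[((m:ℝ)+1)] (F i 1 '' D ∪ F i (-1) '' D) ≠ ∞ := by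
    refine (ENNReal.sum_lt_top.mpr fun i _ => ?_).ne
    refine lt_of_le_of_lt (measure_union_le _ _) ?_
    have h1 := hpiece i 1 (by simp)
    have h2 := hpiece i (-1) (by simp [abs_neg])
    exact ENNReal.add_lt_top.mpr ⟨h1.lt_top, h2.lt_top⟩
  exact hfin (top_le_iff.mp hle)

/-- Lower bound for the Hausdorff measure of a band on the sphere of radius ρ. -/
lemma hausdorff_band_ge (m : ℕ) (ρ t₀ t₁ : ℝ) (hρ : 0 < ρ) (ht₀ : 0 ≤ t₀)
    (ht₁ : t₁ ≤ 3/4 * ρ) (h01 : t₀ ≤ t₁) :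
    ENNReal.ofReal ((t₁ - t₀) * (ρ / (2*((m:ℝ)+1)))^m) ≤
      μH[((m:ℝ)+1)] {y : EuclideanSpace ℝ (Fin (m+2)) | ‖y‖ = ρ ∧ y 0 ∈ Icc t₀ t₁} := by
  set g : ℝ := ρ / (4*((m:ℝ)+1)) with hgdef
  have hg : 0 < g := by positivity
  set B : Set (EuclideanSpace ℝ (Fin (m+2))) := {y | ‖y‖ = ρ ∧ y 0 ∈ Icc t₀ t₁} with hBdef
  set Q : Set (EuclideanSpace ℝ (Fin (m+1))) :=
    {w | w 0 ∈ Icc t₀ t₁ ∧ ∀ j : Fin m, w j.succ ∈ Icc (-g) g} with hQdef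
  -- the projection dropping the last coordinate
  set π : EuclideanSpace ℝ (Fin (m+2)) → EuclideanSpace ℝ (Fin (m+1)) :=
    fun y => WithLp.toLp 2 (fun j : Fin (m+1) => y j.castSucc) with hπdef
  have hπlip : LipschitzWith 1 π := by
    refine LipschitzWith.of_dist_le_mul fun a b => ?_
    rw [NNReal.coe_one, one_mul, EuclideanSpace.dist_eq, EuclideanSpace.dist_eq]
    refine Real.sqrt_le_sqrt ?_
    rw [Fin.sum_univ_castSucc (fun k => dist (a k) (b k) ^ 2)]
    have : (0:ℝ) ≤ dist (a (Fin.last (m+1))) (b (Fin.last (m+1))) ^ 2 := by positivity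
    have heq : ∀ j : Fin (m+1), dist (π a j) (π b j) ^ 2 = dist (a j.castSucc) (b j.castSucc) ^ 2 :=
      fun j => rfl
    simp only [heq]
    linarith
  -- Q is contained in the projection of B
  have hQsub : Q ⊆ π '' B := by
    intro w hw
    obtain ⟨hw0, hwj⟩ := hw
    have hwnorm : ‖w‖^2 ≤ 10/16 * ρ^2 := by
      rw [EuclideanSpace.norm_eq, Real.sq_sqrt (by positivity)]
      have hsum : ∑ j, ‖w j‖ ^ 2 = ‖w 0‖^2 + ∑ j : Fin m, ‖w j.succ‖^2 :=
        Fin.sum_univ_succ (fun j => ‖w j‖ ^ 2)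
      rw [hsum]
      have h0 : ‖w 0‖^2 ≤ 9/16 * ρ^2 := by
        rw [Real.norm_eq_abs, sq_abs]
        have h1 := hw0.1
        have h2 := hw0.2
        nlinarith
      have hj : ∑ j : Fin m, ‖w j.succ‖^2 ≤ (m:ℝ) * g^2 := by
        calc ∑ j : Fin m, ‖w j.succ‖^2 ≤ ∑ _j : Fin m, g^2 := by
              refine Finset.sum_le_sum fun j _ => ?_
              rw [Real.norm_eq_abs, sq_abs]
              have h1 := (hwj j).1
              have h2 := (hwj j).2
              nlinarith
          _ = (m:ℝ) * g^2 := by rw [Finset.sum_const]; simp [nsmul_eq_mul]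
      have hgsq : (m:ℝ) * g^2 ≤ 1/16 * ρ^2 := by
        have hm0 : (0:ℝ) ≤ (m:ℝ) := Nat.cast_nonneg m
        have hkey : g^2 * (16 * ((m:ℝ)+1)^2) = ρ^2 := by
          rw [hgdef]; field_simp; ring
        nlinarith [sq_nonneg g]
      linarith
    set s : ℝ := Real.sqrt (ρ^2 - ‖w‖^2) with hsdef
    have hssq : s^2 = ρ^2 - ‖w‖^2 := Real.sq_sqrt (by nlinarith)
    set y : EuclideanSpace ℝ (Fin (m+2)) := WithLp.toLp 2 (Fin.snoc (α := fun _ => ℝ) w s) with hydef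
    have hycast : ∀ j : Fin (m+1), y j.castSucc = w j := fun j => by
      rw [hydef]; exact Fin.snoc_castSucc (α := fun _ => ℝ) s w j
    have hylast : y (Fin.last (m+1)) = s := by
      rw [hydef]; exact Fin.snoc_last (α := fun _ => ℝ) s w
    have hynorm : ‖y‖ = ρ := by
      rw [EuclideanSpace.norm_eq]
      rw [Fin.sum_univ_castSucc (fun k => ‖y k‖ ^ 2)]
      have hsum : ∑ j : Fin (m+1), ‖y j.castSucc‖ ^ 2 = ‖w‖^2 := by
        rw [EuclideanSpace.norm_eq (𝕜 := ℝ) w, Real.sq_sqrt (by positivity)]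
        exact Finset.sum_congr rfl fun j _ => by rw [hycast j]
      rw [hsum, hylast]
      rw [Real.norm_eq_abs, sq_abs, hssq]
      rw [show ‖w‖^2 + (ρ^2 - ‖w‖^2) = ρ^2 by ring]
      exact Real.sqrt_sq hρ.le
    have hy0 : y 0 = w 0 := by
      have : (0 : Fin (m+2)) = (0 : Fin (m+1)).castSucc := by simp
      rw [this, hycast 0]
    refine ⟨y, ⟨hynorm, by rw [hy0]; exact hw0⟩, ?_⟩
    ext j
    exact hycast j
  -- volume of the pi version of Q
  set Qpi : Set (Fin (m+1) → ℝ) :=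
    Set.pi univ (fun j => if j = 0 then Icc t₀ t₁ else Icc (-g) g) with hQpidef
  have hQim : (WithLp.equiv 2 (Fin (m+1) → ℝ)) '' Q = Qpi := by
    ext v
    constructor
    · rintro ⟨w, ⟨hw0, hwj⟩, rfl⟩
      intro j _
      rcases eq_or_ne j 0 with rfl | hj
      · simpa using hw0
      · obtain ⟨k, rfl⟩ := Fin.eq_succ_of_ne_zero hj
        simpa [Fin.succ_ne_zero] using hwj k
    · intro hv
      refine ⟨(WithLp.equiv 2 (Fin (m+1) → ℝ)).symm v, ⟨?_, ?_⟩, by simp⟩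
      · have := hv 0 (mem_univ _)
        simpa using this
      · intro j
        have := hv j.succ (mem_univ _)
        simpa [Fin.succ_ne_zero] using this
  have hQvol : volume Qpi = ENNReal.ofReal (t₁ - t₀) * ENNReal.ofReal (2*g) ^ m := by
    rw [hQpidef, volume_pi_pi]
    rw [Fin.prod_univ_succ (fun j => volume (if j = 0 then Icc t₀ t₁ else Icc (-g) g))]
    have h0 : volume (if (0 : Fin (m+1)) = 0 then Icc t₀ t₁ else Icc (-g) g)
        = ENNReal.ofReal (t₁ - t₀) := by
      rw [if_pos rfl, Real.volume_Icc]
    have hs : ∀ j : Fin m, volume (if j.succ = 0 then Icc t₀ t₁ else Icc (-g) g)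
        = ENNReal.ofReal (2*g) := by
      intro j
      rw [if_neg (Fin.succ_ne_zero j), Real.volume_Icc]
      congr 1; ring
    rw [h0]
    congr 1
    rw [Finset.prod_congr rfl (fun j _ => hs j), Finset.prod_const, Finset.card_univ,
      Fintype.card_fin]
  -- chain
  have h1 : ENNReal.ofReal ((t₁ - t₀) * (2*g)^m) ≤ μH[((m:ℝ)+1)] Q := by
    have hle := volume_le_hausdorff (m+1) Q
    rw [hQim, hQvol] at hle
    have hcast : ((m+1:ℕ):ℝ) = (m:ℝ)+1 := by push_cast; ring
    rw [hcast] at hle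
    refine le_trans ?_ hle
    rw [ENNReal.ofReal_mul (by linarith), ENNReal.ofReal_pow (by positivity)]
  have h2 : μH[((m:ℝ)+1)] Q ≤ μH[((m:ℝ)+1)] (π '' B) := measure_mono hQsub
  have h3 : μH[((m:ℝ)+1)] (π '' B) ≤ μH[((m:ℝ)+1)] B := by
    have := hπlip.hausdorffMeasure_image_le (show (0:ℝ) ≤ (m:ℝ)+1 by positivity) B
    simpa using this
  have hgg : 2 * g = ρ / (2*((m:ℝ)+1)) := by
    rw [hgdef]
    field_simp
    ring
  rw [← hgg]
  exact le_trans h1 (le_trans h2 h3)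

lemma sq_bound_upper {nx ρ t₀ t Y : ℝ} (hY : Y = ρ^2 - 2*(nx*t) + nx^2)
    (h2xt₀ : 2*nx*t₀ = ρ^2) (ht : t₀ ≤ t) (hnx : 0 < nx) : Y ≤ nx^2 := by nlinarith

lemma sq_bound_lower {nx ρ t₀ t ε Y : ℝ} (hY : Y = ρ^2 - 2*(nx*t) + nx^2)
    (h2xt₀ : 2*nx*t₀ = ρ^2) (ht : t ≤ t₀ + ε/2) (hε : 0 < ε) (hεnx : ε ≤ nx)
    (hnx : 0 < nx) : (nx - ε)^2 ≤ Y := by nlinarith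

lemma sphere_eq_smul (n : ℕ) (ρ : ℝ) (hρ : 0 < ρ) :
    sphere (0 : EuclideanSpace ℝ (Fin n)) ρ = ρ • sphere (0 : EuclideanSpace ℝ (Fin n)) 1 := by
  ext y
  simp only [mem_sphere_zero_iff_norm, Set.mem_smul_set]
  constructor
  · intro hy
    refine ⟨ρ⁻¹ • y, ?_, ?_⟩
    · rw [norm_smul, hy, Real.norm_eq_abs,
        abs_of_nonneg (inv_nonneg.mpr hρ.le), inv_mul_cancel₀ hρ.ne']
    · rw [smul_smul, mul_inv_cancel₀ hρ.ne', one_smul]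
  · rintro ⟨u, hu, rfl⟩
    rw [norm_smul, hu, Real.norm_eq_abs, abs_of_nonneg hρ.le, mul_one]


end AvgAnnuli

open AvgAnnuli


theorem averages_on_annuli_stmt3 (d : ℕ) (hd : 2 ≤ d) :
    ∃ c : ℝ, 0 < c ∧
      ∀ (x : EuclideanSpace ℝ (Fin d)) (ε ρ : ℝ), 1 < ‖x‖ →
        0 < ε → ε ≤ 1 → ε ≤ ρ → ρ ≤ 1 →
        ENNReal.ofReal (c * ε / ρ) ≤
          ((μH[(d : ℝ) - 1] (sphere (0 : EuclideanSpace ℝ (Fin d)) ρ))⁻¹ •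
              (μH[(d : ℝ) - 1] : Measure (EuclideanSpace ℝ (Fin d))).restrict
                (sphere (0 : EuclideanSpace ℝ (Fin d)) ρ))
            {y : EuclideanSpace ℝ (Fin d) | ‖x‖ - ε ≤ ‖y - x‖ ∧ ‖y - x‖ ≤ ‖x‖} := by
  obtain ⟨m, rfl⟩ : ∃ m, d = m + 2 := ⟨d - 2, by omega⟩
  have hE : ((m+2 : ℕ) : ℝ) - 1 = (m:ℝ) + 1 := by push_cast; ring
  set M : ℝ≥0∞ := μH[((m:ℝ)+1)] (sphere (0 : EuclideanSpace ℝ (Fin (m+2))) 1) with hMdef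
  have hMtop : M ≠ ∞ := hausdorff_sphere_one_ne_top m
  set CM : ℝ := M.toReal + 1 with hCMdef
  have hCM : 0 < CM := by positivity
  set c₂ : ℝ := (1/4) * (1/(2*((m:ℝ)+1)))^m with hc₂def
  have hc₂ : 0 < c₂ := by positivity
  refine ⟨c₂ / CM, by positivity, ?_⟩
  intro x ε ρ hx hε hε1 hερ hρ1
  have hρ : 0 < ρ := hε.trans_le hερ
  have hnx : 0 < ‖x‖ := by linarith
  rw [hE]
  set A : Set (EuclideanSpace ℝ (Fin (m+2))) :=
    {y | ‖x‖ - ε ≤ ‖y - x‖ ∧ ‖y - x‖ ≤ ‖x‖} with hAdef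
  have hAmeas : MeasurableSet A := by
    have hc : Continuous fun y : EuclideanSpace ℝ (Fin (m+2)) => ‖y - x‖ :=
      (continuous_id.sub continuous_const).norm
    have hAeq : A = (fun y : EuclideanSpace ℝ (Fin (m+2)) => ‖y - x‖) ⁻¹' Icc (‖x‖ - ε) ‖x‖ := rfl
    rw [hAeq]
    exact hc.measurable measurableSet_Icc
  set S : Set (EuclideanSpace ℝ (Fin (m+2))) := sphere 0 ρ with hSdef
  rw [Measure.smul_apply, Measure.restrict_apply hAmeas, smul_eq_mul]
  -- rotation sending x/‖x‖ to the first basis vector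
  set u : EuclideanSpace ℝ (Fin (m+2)) := ‖x‖⁻¹ • x with hudef
  have hu : ‖u‖ = 1 := by
    rw [hudef, norm_smul, Real.norm_eq_abs, abs_of_nonneg (inv_nonneg.mpr hnx.le),
      inv_mul_cancel₀ hnx.ne']
  have hxu : x = ‖x‖ • u := by
    rw [hudef, smul_smul, mul_inv_cancel₀ hnx.ne', one_smul]
  have hv : Orthonormal ℝ (Set.restrict {(0 : Fin (m+2))} (fun _ => u)) := by
    refine ⟨fun i => hu, ?_⟩
    intro i j hij
    exfalso
    apply hij
    have hi := i.2
    have hj := j.2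
    simp only [mem_singleton_iff] at hi hj
    exact Subtype.ext (hi.trans hj.symm)
  obtain ⟨b, hb⟩ := hv.exists_orthonormalBasis_extension_of_card_eq
    (by simp [finrank_euclideanSpace_fin])
  have hb0 : b 0 = u := hb 0 rfl
  set e := b.repr with hedef
  have heu : e u = EuclideanSpace.single 0 1 := by
    rw [← hb0]
    exact b.repr_self 0
  -- band parameters
  set t₀ : ℝ := ρ^2 / (2 * ‖x‖) with ht₀def
  set t₁ : ℝ := min (t₀ + ε/2) (3/4 * ρ) with ht₁def
  have ht₀0 : 0 ≤ t₀ := by positivity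
  have ht₀2 : t₀ ≤ ρ/2 := by
    rw [ht₀def, div_le_iff₀ (by positivity)]
    nlinarith
  have ht₁le : t₁ ≤ 3/4 * ρ := min_le_right _ _
  have h01 : t₀ ≤ t₁ := le_min (by linarith) (by linarith)
  have hgap : ε/4 ≤ t₁ - t₀ := by
    rcases le_total (t₀ + ε/2) (3/4 * ρ) with h | h
    · rw [ht₁def, min_eq_left h]; linarith
    · rw [ht₁def, min_eq_right h]; linarith
  have h2xt₀ : 2 * ‖x‖ * t₀ = ρ^2 := by
    rw [ht₀def]
    field_simp
  set B : Set (EuclideanSpace ℝ (Fin (m+2))) :=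
    {y | ‖y‖ = ρ ∧ y 0 ∈ Icc t₀ t₁} with hBdef
  -- B sits inside e '' (A ∩ S)
  have hBsub : B ⊆ e '' (A ∩ S) := by
    intro y' hy'
    obtain ⟨hy'n, hy'0⟩ := hy'
    obtain ⟨hy'l, hy'r⟩ := hy'0
    set y := e.symm y' with hydef2
    have hey : e y = y' := e.apply_symm_apply y'
    have hyn : ‖y‖ = ρ := by rw [hydef2, LinearIsometryEquiv.norm_map]; exact hy'n
    have hinner : inner (𝕜 := ℝ) y x = ‖x‖ * y' 0 := by
      calc inner (𝕜 := ℝ) y x = inner (𝕜 := ℝ) (e y) (e x) :=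
            (e.inner_map_map y x).symm
        _ = inner (𝕜 := ℝ) y' (e (‖x‖ • u)) := by rw [hey, ← hxu]
        _ = inner (𝕜 := ℝ) y' (‖x‖ • EuclideanSpace.single 0 1) := by
            rw [LinearIsometryEquiv.map_smul, heu]
        _ = ‖x‖ * inner (𝕜 := ℝ) y' (EuclideanSpace.single 0 1) := real_inner_smul_right _ _ _
        _ = ‖x‖ * y' 0 := by
            rw [EuclideanSpace.inner_single_right]
            simp
    have hsq : ‖y - x‖^2 = ρ^2 - 2*(‖x‖ * y' 0) + ‖x‖^2 := by
      rw [norm_sub_sq_real, hinner, hyn]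
    have hupper : ‖y - x‖ ≤ ‖x‖ := by
      have h2 : ‖y - x‖^2 ≤ ‖x‖^2 := sq_bound_upper hsq h2xt₀ hy'l hnx
      calc ‖y - x‖ = Real.sqrt (‖y - x‖^2) := (Real.sqrt_sq (norm_nonneg _)).symm
        _ ≤ Real.sqrt (‖x‖^2) := Real.sqrt_le_sqrt h2
        _ = ‖x‖ := Real.sqrt_sq (norm_nonneg _)
    have hlower : ‖x‖ - ε ≤ ‖y - x‖ := by
      have ht₁' : y' 0 ≤ t₀ + ε/2 := hy'r.trans (min_le_left _ _)
      have h2 : (‖x‖ - ε)^2 ≤ ‖y - x‖^2 :=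
        sq_bound_lower hsq h2xt₀ ht₁' hε (hε1.trans hx.le) hnx
      calc ‖x‖ - ε = Real.sqrt ((‖x‖ - ε)^2) := (Real.sqrt_sq (by linarith)).symm
        _ ≤ Real.sqrt (‖y - x‖^2) := Real.sqrt_le_sqrt h2
        _ = ‖y - x‖ := Real.sqrt_sq (norm_nonneg _)
    exact ⟨y, ⟨⟨hlower, hupper⟩, mem_sphere_zero_iff_norm.mpr hyn⟩, hey⟩
  -- lower bound on the numerator
  have hlow : ENNReal.ofReal (c₂ * ε * ρ^m) ≤ μH[((m:ℝ)+1)] (A ∩ S) := by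
    have hfac : c₂ * ε * ρ^m = ε/4 * (ρ/(2*((m:ℝ)+1)))^m := by
      rw [hc₂def, div_pow, div_pow, one_pow]
      field_simp
    calc ENNReal.ofReal (c₂ * ε * ρ^m)
        ≤ ENNReal.ofReal ((t₁ - t₀) * (ρ/(2*((m:ℝ)+1)))^m) := by
          refine ENNReal.ofReal_le_ofReal ?_
          rw [hfac]
          have hpow : (0:ℝ) ≤ (ρ/(2*((m:ℝ)+1)))^m := by positivity
          exact mul_le_mul_of_nonneg_right hgap hpow
      _ ≤ μH[((m:ℝ)+1)] B := hausdorff_band_ge m ρ t₀ t₁ hρ ht₀0 ht₁le h01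
      _ ≤ μH[((m:ℝ)+1)] (e '' (A ∩ S)) := measure_mono hBsub
      _ = μH[((m:ℝ)+1)] (A ∩ S) :=
          (e.isometry).hausdorffMeasure_image (Or.inl (by positivity)) _
  -- upper bound on the denominator
  have hSup : μH[((m:ℝ)+1)] S ≤ ENNReal.ofReal (CM * ρ^(m+1)) := by
    rw [hSdef, sphere_eq_smul (m+2) ρ hρ,
      MeasureTheory.Measure.hausdorffMeasure_smul₀ (by positivity) hρ.ne', ← hMdef]
    rw [ENNReal.smul_def, smul_eq_mul, ENNReal.coe_rpow_of_nonneg _ (by positivity)]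
    have h1 : ((‖ρ‖₊ : ℝ≥0∞)) ^ ((m:ℝ)+1) = ENNReal.ofReal (ρ^(m+1)) := by
      have hcast : ((m:ℝ)+1) = ((m+1 : ℕ) : ℝ) := by push_cast; ring
      rw [hcast, ENNReal.rpow_natCast, ENNReal.ofReal_pow hρ.le]
      congr 1
      exact Real.enorm_eq_ofReal hρ.le
    rw [h1]
    have h2 : M ≤ ENNReal.ofReal CM := by
      rw [hCMdef]
      calc M = ENNReal.ofReal M.toReal := (ENNReal.ofReal_toReal hMtop).symm
        _ ≤ ENNReal.ofReal (M.toReal + 1) := ENNReal.ofReal_le_ofReal (by linarith)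
    calc ENNReal.ofReal (ρ^(m+1)) * M ≤ ENNReal.ofReal (ρ^(m+1)) * ENNReal.ofReal CM :=
          mul_le_mul' le_rfl h2
      _ = ENNReal.ofReal (CM * ρ^(m+1)) := by
          rw [← ENNReal.ofReal_mul (by positivity), mul_comm]
  have hS0 : μH[((m:ℝ)+1)] S ≠ 0 := by
    intro h0
    have h1 : μH[((m:ℝ)+1)] (A ∩ S) ≤ μH[((m:ℝ)+1)] S := measure_mono inter_subset_right
    rw [h0] at h1
    have h2 := hlow.trans h1
    rw [le_zero_iff, ENNReal.ofReal_eq_zero] at h2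
    have := mul_pos (mul_pos hc₂ hε) (pow_pos hρ m)
    linarith
  have hStop : μH[((m:ℝ)+1)] S ≠ ∞ :=
    fun h => ENNReal.ofReal_ne_top (top_le_iff.mp (h ▸ hSup))
  -- final computation
  rw [← ENNReal.div_eq_inv_mul, ENNReal.le_div_iff_mul_le (Or.inl hS0) (Or.inl hStop)]
  calc ENNReal.ofReal (c₂ / CM * ε / ρ) * μH[((m:ℝ)+1)] S
      ≤ ENNReal.ofReal (c₂ / CM * ε / ρ) * ENNReal.ofReal (CM * ρ^(m+1)) :=
        mul_le_mul' le_rfl hSup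
    _ = ENNReal.ofReal (c₂ / CM * ε / ρ * (CM * ρ^(m+1))) :=
        (ENNReal.ofReal_mul (by positivity)).symm
    _ = ENNReal.ofReal (c₂ * ε * ρ^m) := by
        congr 1
        field_simp
        ring
    _ ≤ μH[((m:ℝ)+1)] (A ∩ S) := hlow
end AvgAnnuliProof
end

section
/- If the thickness function satisfies e(r) → ∞ as r → ∞, then the family of annuli (C_{r,e(r)})_{r>0} in ℝ^d, d ≥ 2, is a Følner family: for every t ∈ ℝ^d, |C_{r,e(r)} Δ (t + C_{r,e(r)})| / |C_{r,e(r)}| → 0 as r → ∞, where Δ is symmetric difference. -/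
open MeasureTheory Metric Filter Topology
open scoped ENNReal symmDiff

/-- The annulus `{t : r - e ≤ ‖t‖ ≤ r}` in `ℝ^d`. -/
def annulus (d : ℕ) (r e : ℝ) : Set (EuclideanSpace ℝ (Fin d)) :=
  {t | r - e ≤ ‖t‖ ∧ ‖t‖ ≤ r}

private lemma le_sub_pow (n : ℕ) {x y : ℝ} (hy : 0 ≤ y) (hxy : y ≤ x) :
    (x - y) * x ^ n ≤ x ^ (n + 1) - y ^ (n + 1) := by
  have h := pow_le_pow_left₀ hy hxy n
  have h2 : 0 ≤ y * (x ^ n - y ^ n) := mul_nonneg hy (by linarith)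
  simp only [pow_succ]
  nlinarith

private lemma sub_pow_le (n : ℕ) {x y : ℝ} (hy : 0 ≤ y) (hxy : y ≤ x) :
    x ^ (n + 1) - y ^ (n + 1) ≤ (x - y) * (n + 1) * x ^ n := by
  induction n with
  | zero => simp
  | succ n ih =>
    have hx : 0 ≤ x := hy.trans hxy
    have hpow : y ^ (n + 1) ≤ x ^ (n + 1) := pow_le_pow_left₀ hy hxy (n + 1)
    have hmul : x * (x ^ (n + 1) - y ^ (n + 1)) ≤ x * ((x - y) * (n + 1) * x ^ n) :=
      mul_le_mul_of_nonneg_left ih hx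
    have h3 : (x - y) * y ^ (n + 1) ≤ (x - y) * x ^ (n + 1) :=
      mul_le_mul_of_nonneg_left hpow (by linarith)
    have e3 : x * ((x - y) * ((n : ℝ) + 1) * x ^ n) = (x - y) * ((n : ℝ) + 1) * x ^ (n + 1) := by
      ring
    rw [e3] at hmul
    push_cast
    calc x ^ (n + 1 + 1) - y ^ (n + 1 + 1)
        = x * (x ^ (n + 1) - y ^ (n + 1)) + (x - y) * y ^ (n + 1) := by ring
      _ ≤ (x - y) * ((n : ℝ) + 1) * x ^ (n + 1) + (x - y) * x ^ (n + 1) := add_le_add hmul h3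
      _ = (x - y) * ((n : ℝ) + 1 + 1) * x ^ (n + 1) := by ring

theorem averages_on_annuli_stmt17 (d : ℕ) (hd : 2 ≤ d)
    (e : ℝ → ℝ) (hpos : ∀ r > 0, 0 < e r) (hle : ∀ r > 0, e r ≤ r)
    (htend : Tendsto e atTop atTop) :
    ∀ t : EuclideanSpace ℝ (Fin d),
      Tendsto (fun r =>
          volume ((annulus d r (e r)) ∆ ((fun y => t + y) '' annulus d r (e r))) /
            volume (annulus d r (e r)))
        atTop (nhds (0 : ℝ≥0∞)) := by
  intro t
  haveI : Nonempty (Fin d) := ⟨⟨0, by omega⟩⟩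
  obtain ⟨n, hn⟩ : ∃ n, d = n + 1 := ⟨d - 1, by omega⟩
  set a := ‖t‖ with ha
  have ha0 : 0 ≤ a := norm_nonneg t
  set c := volume (ball (0 : EuclideanSpace ℝ (Fin d)) 1) with hc
  have hc0 : c ≠ 0 := (measure_ball_pos _ _ one_pos).ne'
  have hcT : c ≠ ⊤ := measure_ball_lt_top.ne
  set g : ℝ → ℝ≥0∞ :=
    fun r => ENNReal.ofReal (4 * a * (n + 1) * (r + a) ^ n / (e r * r ^ n)) with hg
  -- the bound tends to zero
  have hglim : Tendsto g atTop (𝓝 0) := by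
    have hf : Tendsto (fun r => 4 * a * (n + 1) * (r + a) ^ n / (e r * r ^ n)) atTop (𝓝 0) := by
      have hh : Tendsto (fun r => 4 * a * (n + 1 : ℝ) * 2 ^ n / e r) atTop (𝓝 0) :=
        Tendsto.div_atTop tendsto_const_nhds htend
      refine squeeze_zero' ?_ ?_ hh
      · filter_upwards [eventually_ge_atTop (max 1 a)] with r hr
        have hr1 : (1 : ℝ) ≤ r := le_trans (le_max_left _ _) hr
        have her : 0 < e r := hpos r (by linarith)
        positivity
      · filter_upwards [eventually_ge_atTop (max 1 a)] with r hr
        have hr1 : (1 : ℝ) ≤ r := le_trans (le_max_left _ _) hr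
        have hra : a ≤ r := le_trans (le_max_right _ _) hr
        have her : 0 < e r := hpos r (by linarith)
        have hrn : (0 : ℝ) < r ^ n := pow_pos (by linarith) n
        have h1 : (r + a) ^ n ≤ 2 ^ n * r ^ n := by
          rw [← mul_pow]; exact pow_le_pow_left₀ (by linarith) (by linarith) n
        calc 4 * a * (n + 1 : ℝ) * (r + a) ^ n / (e r * r ^ n)
            ≤ 4 * a * (n + 1) * (2 ^ n * r ^ n) / (e r * r ^ n) := by
              have hd0 : (0 : ℝ) < e r * r ^ n := mul_pos her hrn
              exact (div_le_div_iff_of_pos_right hd0).mpr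
                (mul_le_mul_of_nonneg_left h1 (by positivity))
            _ = 4 * a * (n + 1) * 2 ^ n / e r := by
              field_simp
    have := ENNReal.tendsto_ofReal hf
    simpa using this
  refine tendsto_of_tendsto_of_tendsto_of_le_of_le' tendsto_const_nhds hglim
    (Eventually.of_forall fun r => zero_le) ?_
  filter_upwards [eventually_ge_atTop (max 1 a)] with r hr
  have hr1 : (1 : ℝ) ≤ r := le_trans (le_max_left _ _) hr
  have hra : a ≤ r := le_trans (le_max_right _ _) hr
  have hr0 : (0 : ℝ) < r := by linarith
  set ε := e r with hε
  have hε0 : 0 < ε := hpos r hr0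
  have hεr : ε ≤ r := hle r hr0
  set A := annulus d r ε with hA
  set B := (fun y => t + y) '' A with hB
  -- membership in B
  have hBmem : ∀ x : EuclideanSpace ℝ (Fin d), x ∈ B ↔ r - ε ≤ ‖x - t‖ ∧ ‖x - t‖ ≤ r := by
    intro x
    constructor
    · rintro ⟨y, hy, rfl⟩
      rw [hA] at hy
      simpa [annulus, add_sub_cancel_left] using hy
    · intro h
      refine ⟨x - t, ?_, by simp⟩
      rw [hA]
      exact h
  -- annulus as a set difference
  have hAset : A = closedBall (0 : EuclideanSpace ℝ (Fin d)) r \ ball 0 (r - ε) := by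
    ext x
    simp [hA, annulus, mem_closedBall_zero_iff, mem_ball_zero_iff, not_lt, and_comm]
  -- volume of the annulus
  have hvolA : volume A = ENNReal.ofReal (r ^ d - (r - ε) ^ d) * c := by
    rw [hAset, measure_diff
        ((ball_subset_ball (by linarith)).trans ball_subset_closedBall)
        measurableSet_ball.nullMeasurableSet measure_ball_lt_top.ne,
      Measure.addHaar_closedBall _ _ hr0.le, Measure.addHaar_ball _ _ (by linarith : (0:ℝ) ≤ r - ε),
      finrank_euclideanSpace_fin,
      ENNReal.ofReal_sub _ (pow_nonneg (by linarith : (0:ℝ) ≤ r - ε) d), ENNReal.sub_mul]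
    intro _ _; exact hcT
  -- lower bound on volume of annulus
  have hDlow : ENNReal.ofReal (ε * r ^ n) * c ≤ volume A := by
    rw [hvolA]
    refine mul_le_mul_left (ENNReal.ofReal_le_ofReal ?_) c
    have := le_sub_pow n (by linarith : (0:ℝ) ≤ r - ε) (by linarith : r - ε ≤ r)
    rw [hn]
    nlinarith [pow_pos hr0 n]
  -- shells
  set b2 := max (r - ε - a) 0 with hb2
  set S1 := closedBall (0 : EuclideanSpace ℝ (Fin d)) (r + a) \ ball 0 (r - a) with hS1
  set S2 := closedBall (0 : EuclideanSpace ℝ (Fin d)) (r - ε + a) \ ball 0 b2 with hS2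
  have hsub : A ∆ B ⊆ S1 ∪ S2 := by
    intro x hx
    have hnx : 0 ≤ ‖x‖ := norm_nonneg x
    have hx1 : ‖x‖ ≤ ‖x - t‖ + a := by
      calc ‖x‖ = ‖x - t + t‖ := by rw [sub_add_cancel]
        _ ≤ ‖x - t‖ + ‖t‖ := norm_add_le _ _
    have hx2 : ‖x - t‖ ≤ ‖x‖ + a := norm_sub_le x t
    rw [Set.mem_symmDiff] at hx
    simp only [hS1, hS2, Set.mem_union, Set.mem_diff, mem_closedBall_zero_iff,
      mem_ball_zero_iff, not_lt]
    rcases hx with ⟨hxA, hxB⟩ | ⟨hxB, hxA⟩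
    · obtain ⟨h1, h2⟩ := hxA
      rw [hBmem] at hxB
      rcases lt_or_ge ‖x - t‖ (r - ε) with h | h
      · right
        refine ⟨by linarith, ?_⟩
        exact max_le (by linarith) hnx
      · rcases le_or_gt ‖x - t‖ r with h' | h'
        · exact absurd ⟨h, h'⟩ hxB
        · left; constructor <;> linarith
    · rw [hBmem] at hxB
      obtain ⟨h1, h2⟩ := hxB
      simp only [hA, annulus, Set.mem_setOf_eq, not_and, not_le] at hxA
      rcases lt_or_ge ‖x‖ (r - ε) with h | h
      · right
        refine ⟨by linarith, ?_⟩
        exact max_le (by linarith) hnx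
      · have h' := hxA h
        left; constructor <;> linarith
  -- volume of shells
  have hshell : ∀ s1 s2 : ℝ, 0 ≤ s1 → s1 ≤ s2 →
      volume (closedBall (0 : EuclideanSpace ℝ (Fin d)) s2 \ ball 0 s1) =
        ENNReal.ofReal (s2 ^ d - s1 ^ d) * c := by
    intro s1 s2 h1 h12
    rw [measure_diff ((ball_subset_ball h12).trans ball_subset_closedBall)
        measurableSet_ball.nullMeasurableSet measure_ball_lt_top.ne,
      Measure.addHaar_closedBall _ _ (h1.trans h12), Measure.addHaar_ball _ _ h1,
      finrank_euclideanSpace_fin, ENNReal.ofReal_sub _ (pow_nonneg h1 d), ENNReal.sub_mul]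
    intro _ _; exact hcT
  have hvS1 : volume S1 ≤ ENNReal.ofReal (2 * a * (n + 1) * (r + a) ^ n) * c := by
    rw [hS1, hshell (r - a) (r + a) (by linarith) (by linarith)]
    refine mul_le_mul_left (ENNReal.ofReal_le_ofReal ?_) c
    have := sub_pow_le n (by linarith : (0:ℝ) ≤ r - a) (by linarith : r - a ≤ r + a)
    rw [hn]
    nlinarith
  have hvS2 : volume S2 ≤ ENNReal.ofReal (2 * a * (n + 1) * (r + a) ^ n) * c := by
    have hb20 : 0 ≤ b2 := le_max_right _ _
    have hb2c : b2 ≤ r - ε + a := max_le (by linarith) (by linarith)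
    rw [hS2, hshell b2 (r - ε + a) hb20 hb2c]
    refine mul_le_mul_left (ENNReal.ofReal_le_ofReal ?_) c
    have h1 := sub_pow_le n hb20 hb2c
    have hdiff : r - ε + a - b2 ≤ 2 * a := by
      rcases max_cases (r - ε - a) 0 with ⟨h, _⟩ | ⟨h, h'⟩ <;> rw [hb2, h] <;> linarith
    have hc2 : (r - ε + a) ^ n ≤ (r + a) ^ n :=
      pow_le_pow_left₀ (by linarith) (by linarith) n
    have hnn : (0 : ℝ) ≤ (n + 1 : ℝ) * (r - ε + a) ^ n :=
      mul_nonneg (by positivity) (pow_nonneg (by linarith) n)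
    rw [hn]
    calc (r - ε + a) ^ (n + 1) - b2 ^ (n + 1)
        ≤ (r - ε + a - b2) * (n + 1) * (r - ε + a) ^ n := h1
      _ ≤ 2 * a * (n + 1) * (r + a) ^ n := by
          have : (r - ε + a - b2) * ((n + 1) * (r - ε + a) ^ n)
              ≤ 2 * a * ((n + 1) * (r + a) ^ n) := by
            apply mul_le_mul hdiff ?_ hnn (by linarith)
            have : (0:ℝ) ≤ (n + 1 : ℝ) := by positivity
            exact mul_le_mul_of_nonneg_left hc2 this
          linarith [this]
  -- numerator bound
  have hnum : volume (A ∆ B) ≤ ENNReal.ofReal (4 * a * (n + 1) * (r + a) ^ n) * c := by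
    calc volume (A ∆ B) ≤ volume (S1 ∪ S2) := measure_mono hsub
      _ ≤ volume S1 + volume S2 := measure_union_le _ _
      _ ≤ ENNReal.ofReal (2 * a * (n + 1) * (r + a) ^ n) * c +
            ENNReal.ofReal (2 * a * (n + 1) * (r + a) ^ n) * c := add_le_add hvS1 hvS2
      _ = ENNReal.ofReal (4 * a * (n + 1) * (r + a) ^ n) * c := by
          rw [← add_mul, ← ENNReal.ofReal_add (by positivity) (by positivity)]
          ring_nf
  -- conclude
  have hden : (0 : ℝ) < ε * r ^ n := by positivity
  calc volume (A ∆ B) / volume A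
      ≤ (ENNReal.ofReal (4 * a * (n + 1) * (r + a) ^ n) * c) /
          (ENNReal.ofReal (ε * r ^ n) * c) := ENNReal.div_le_div hnum hDlow
    _ = ENNReal.ofReal (4 * a * (n + 1) * (r + a) ^ n) / ENNReal.ofReal (ε * r ^ n) :=
        ENNReal.mul_div_mul_right _ _ hc0 hcT
    _ = g r := by
        rw [hg]
        simp only
        rw [hε, ENNReal.ofReal_div_of_pos (show (0:ℝ) < e r * r ^ n from hden)]
end
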